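/- Let A be a real symmetric (p−1)×(p−1) matrix, q ∈ ℝ^{p−1}, a ∈ ℝ, and z = u + iv with v > 0. Then | (1 + qᵀ(A − zI)⁻² q) / (z − a + qᵀ(A − zI)⁻¹ q) | ≤ 1/v. -/

import Mathlib

open Matrix

-- general dot product lemma
lemma dot_conj_diag {n : ℕ} (U : Matrix (Fin n) (Fin n) ℂ) (d : Fin n → ℂ)
    (qc : Fin n → ℂ) (hq : ∀ i, (starRingEnd ℂ) (qc i) = qc i) :
    qc ⬝ᵥ (U * diagonal d * Uᴴ).mulVec qc
      = ∑ j, d j * Complex.normSq ((Uᴴ.mulVec qc) j) := by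
  have h1 : (U * diagonal d * Uᴴ).mulVec qc
      = U.mulVec ((diagonal d).mulVec (Uᴴ.mulVec qc)) := by
    rw [← mulVec_mulVec, ← mulVec_mulVec]
  rw [h1, dotProduct_mulVec]
  have h2 : U.vecMul qc = fun j => (starRingEnd ℂ) ((Uᴴ.mulVec qc) j) := by
    funext j
    simp only [vecMul, mulVec, dotProduct, conjTranspose_apply, map_sum]
    congr 1
    funext i
    rw [RingHom.map_mul, hq i, starRingEnd_apply, star_star]
    ring
  rw [h2]
  simp only [dotProduct, mulVec_diagonal]
  congr 1
  funext j
  rw [Complex.normSq_eq_conj_mul_self]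
  ring

/-- For real symmetric `A`, real vector `q`, real `a` and
`z = u + iv` with `v > 0`,
`|(1 + qᵀ(A−zI)⁻²q) / (z − a + qᵀ(A−zI)⁻¹q)| ≤ 1/v`. -/
theorem resolvent_quadratic_ratio_bound
    {n : ℕ} (A : Matrix (Fin n) (Fin n) ℝ) (hA : A.IsSymm)
    (q : Fin n → ℝ) (a : ℝ) (z : ℂ) (hz : 0 < z.im) :
    ‖((1 + (fun i => (q i : ℂ)) ⬝ᵥ
            (((A.map (Complex.ofReal) - z • 1)⁻¹ *
              (A.map (Complex.ofReal) - z • 1)⁻¹).mulVec fun i => (q i : ℂ))) /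
          (z - (a : ℂ) + (fun i => (q i : ℂ)) ⬝ᵥ
            ((A.map (Complex.ofReal) - z • 1)⁻¹).mulVec fun i => (q i : ℂ)))‖
      ≤ 1 / z.im := by
  set M := A.map (Complex.ofReal) with hMdef
  have hM : M.IsHermitian := by
    rw [Matrix.IsHermitian]
    ext i j
    simp only [conjTranspose_apply, Matrix.map_apply, RCLike.star_def,
      Complex.conj_ofReal, hMdef]
    exact_mod_cast hA.apply i j
  set U : Matrix (Fin n) (Fin n) ℂ := (hM.eigenvectorUnitary : Matrix (Fin n) (Fin n) ℂ)
    with hUdef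
  set lam := hM.eigenvalues with hlamdef
  set w : Fin n → ℂ := fun j => (lam j : ℂ) - z with hwdef
  have hUU : U * Uᴴ = 1 := by
    rw [← Matrix.star_eq_conjTranspose]
    exact (Matrix.mem_unitaryGroup_iff).mp hM.eigenvectorUnitary.2
  have hUU' : Uᴴ * U = 1 := by
    rw [← Matrix.star_eq_conjTranspose]
    exact (Matrix.mem_unitaryGroup_iff').mp hM.eigenvectorUnitary.2
  have hwne : ∀ j, w j ≠ 0 := by
    intro j h
    have : (w j).im = 0 := by rw [h]; rfl
    simp [hwdef, Complex.sub_im, Complex.ofReal_im] at this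
    linarith
  have hB : M - z • 1 = U * diagonal w * Uᴴ := by
    have h1 : diagonal w = diagonal (Complex.ofReal ∘ lam) - z • 1 := by
      rw [smul_one_eq_diagonal, ← diagonal_sub]
      rfl
    rw [h1, Matrix.mul_sub, Matrix.sub_mul]
    congr 1
    · exact hM.spectral_theorem
    · rw [Matrix.mul_smul, Matrix.mul_one, Matrix.smul_mul, hUU]
  have hBinv : (M - z • 1)⁻¹ = U * diagonal (fun j => (w j)⁻¹) * Uᴴ := by
    apply inv_eq_right_inv
    rw [hB, Matrix.mul_assoc, Matrix.mul_assoc, ← Matrix.mul_assoc Uᴴ,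
      ← Matrix.mul_assoc Uᴴ, hUU', Matrix.one_mul, ← Matrix.mul_assoc (diagonal w),
      diagonal_mul_diagonal]
    have : (fun j => w j * (w j)⁻¹) = fun _ => (1 : ℂ) := by
      funext j; exact mul_inv_cancel₀ (hwne j)
    rw [← Matrix.mul_assoc, this, diagonal_one, Matrix.mul_one, hUU]
  have hBinv2 : (M - z • 1)⁻¹ * (M - z • 1)⁻¹
      = U * diagonal (fun j => (w j)⁻¹ * (w j)⁻¹) * Uᴴ := by
    rw [hBinv, Matrix.mul_assoc, Matrix.mul_assoc, ← Matrix.mul_assoc Uᴴ,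
      ← Matrix.mul_assoc Uᴴ, hUU', Matrix.one_mul, ← Matrix.mul_assoc (diagonal _),
      diagonal_mul_diagonal, ← Matrix.mul_assoc, Matrix.mul_assoc U]
  set qc : Fin n → ℂ := fun i => (q i : ℂ) with hqcdef
  have hq : ∀ i, (starRingEnd ℂ) (qc i) = qc i := fun i => Complex.conj_ofReal _
  set c := Uᴴ.mulVec qc with hcdef
  set m : Fin n → ℝ := fun j => Complex.normSq (c j) with hmdef
  have hdot1 : qc ⬝ᵥ ((M - z • 1)⁻¹).mulVec qc = ∑ j, (w j)⁻¹ * (m j : ℂ) := by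
    rw [hBinv, dot_conj_diag U _ qc hq]
  have hdot2 : qc ⬝ᵥ ((M - z • 1)⁻¹ * (M - z • 1)⁻¹).mulVec qc
      = ∑ j, ((w j)⁻¹ * (w j)⁻¹) * (m j : ℂ) := by
    rw [hBinv2, dot_conj_diag U _ qc hq]
  rw [hdot1, hdot2]
  set S : ℝ := 1 + ∑ j, m j / Complex.normSq (w j) with hSdef
  have hm0 : ∀ j, 0 ≤ m j := fun j => Complex.normSq_nonneg _
  have hS1 : 1 ≤ S := by
    rw [hSdef]
    have : 0 ≤ ∑ j, m j / Complex.normSq (w j) :=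
      Finset.sum_nonneg fun j _ => div_nonneg (hm0 j) (Complex.normSq_nonneg _)
    linarith
  have hS0 : 0 < S := lt_of_lt_of_le one_pos hS1
  -- imaginary part of the denominator
  have hwim : ∀ j, (w j).im = -z.im := by
    intro j; simp [hwdef, Complex.sub_im, Complex.ofReal_im]
  have hImDen : (z - (a : ℂ) + ∑ j, (w j)⁻¹ * (m j : ℂ)).im = z.im * S := by
    rw [Complex.add_im, Complex.sub_im, Complex.ofReal_im, Complex.im_sum]
    have : ∀ j, ((w j)⁻¹ * (m j : ℂ)).im = z.im * (m j / Complex.normSq (w j)) := by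
      intro j
      rw [Complex.mul_im, Complex.ofReal_im, Complex.ofReal_re, Complex.inv_im, hwim j]
      ring
    rw [Finset.sum_congr rfl (fun j _ => this j), ← Finset.mul_sum, hSdef]
    ring
  -- bound on the numerator
  have hNum : ‖(1 + ∑ j, ((w j)⁻¹ * (w j)⁻¹) * (m j : ℂ))‖ ≤ S := by
    calc ‖(1 + ∑ j, ((w j)⁻¹ * (w j)⁻¹) * (m j : ℂ))‖
        ≤ ‖(1 : ℂ)‖ + ‖(∑ j, ((w j)⁻¹ * (w j)⁻¹) * (m j : ℂ))‖ :=
          norm_add_le _ _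
      _ ≤ 1 + ∑ j, ‖(((w j)⁻¹ * (w j)⁻¹) * (m j : ℂ))‖ := by
          rw [norm_one]
          exact add_le_add (le_refl 1) (norm_sum_le _ _)
      _ = S := by
          rw [hSdef]
          congr 1
          apply Finset.sum_congr rfl
          intro j _
          rw [norm_mul, norm_mul, norm_inv,
            Complex.norm_of_nonneg (hm0 j), ← Complex.sq_norm, sq, div_eq_mul_inv, mul_inv]
          ring
  have hDen : z.im * S ≤ ‖(z - (a : ℂ) + ∑ j, (w j)⁻¹ * (m j : ℂ))‖ := by
    calc z.im * S = |(z - (a : ℂ) + ∑ j, (w j)⁻¹ * (m j : ℂ)).im| := by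
          rw [hImDen, abs_of_nonneg (by positivity)]
      _ ≤ _ := Complex.abs_im_le_norm _
  rw [norm_div]
  calc ‖(1 + ∑ j, ((w j)⁻¹ * (w j)⁻¹) * (m j : ℂ))‖ /
        ‖(z - (a : ℂ) + ∑ j, (w j)⁻¹ * (m j : ℂ))‖
      ≤ S / (z.im * S) := div_le_div₀ hS0.le hNum (by positivity) hDen
    _ = 1 / z.im := by rw [mul_comm, ← div_div, div_self (ne_of_gt hS0)]
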